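/- Assume the following spectral estimate of Kovrijkine type: there is a constant K > 1 (depending only on the dimension n) such that for every set ω ⊂ ℝ^n that is γ-thick at scale L (γ ∈ (0,1], L > 0), every λ ≥ 0, and every f ∈ L²(ℝ^n) whose Fourier transform is supported in the ball of radius √λ, one has ‖f‖_{L²(ℝ^n)} ≤ (K/γ)^{K(1+L√λ)}·‖f‖_{L²(ω)}. Then: if α ∈ (0,1) and ω ⊂ ℝ^n is α-exponentially thick, there exists c₁ > 0 such that for all λ > 0 and all f ∈ L²(ℝ^n) with Fourier support in the ball of radius √λ, ‖f‖_{L²(ℝ^n)} ≤ c₁·exp(c₁·λ^{α/2})·‖f‖_{L²(ω)}. -/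

import Mathlib

open MeasureTheory ENNReal

/-- `f` is band-limited with Fourier support in the closed ball of radius `R`: it is the
inverse Fourier transform of an integrable function supported in that ball. -/
def BandLimited (n : ℕ) (R : ℝ) (f : EuclideanSpace ℝ (Fin n) → ℂ) : Prop :=
  ∃ g : EuclideanSpace ℝ (Fin n) → ℂ, Integrable g ∧
    Function.support g ⊆ Metric.closedBall 0 R ∧ f = FourierTransformInv.fourierInv g

/-- The `L²` norm of `f` on the set `s`. -/
noncomputable def L2On (n : ℕ) (f : EuclideanSpace ℝ (Fin n) → ℂ)
    (s : Set (EuclideanSpace ℝ (Fin n))) : ℝ≥0∞ :=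
  eLpNorm (s.indicator f) 2 volume

/-- Assuming the Kovrijkine-type spectral estimate for thick sets, every `α`-exponentially
thick set `ω ⊆ ℝⁿ` (with `α ∈ (0,1)`) satisfies the spectral estimate
`‖f‖_{L²(ℝⁿ)} ≤ c₁ exp(c₁ λ^{α/2}) ‖f‖_{L²(ω)}` for band-limited `f` at frequency `√λ`. -/
theorem spectral_estimate_expThick (n : ℕ) (K : ℝ) (hK : 1 < K)
    (hKov : ∀ γ L : ℝ, γ ∈ Set.Ioc (0 : ℝ) 1 → 0 < L →
      ∀ ω : Set (EuclideanSpace ℝ (Fin n)), MeasurableSet ω →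
      (∀ x : EuclideanSpace ℝ (Fin n),
        ENNReal.ofReal γ * volume (Metric.ball x L) ≤ volume (ω ∩ Metric.ball x L)) →
      ∀ lam : ℝ, 0 ≤ lam → ∀ f : EuclideanSpace ℝ (Fin n) → ℂ, MemLp f 2 volume →
        BandLimited n (Real.sqrt lam) f →
        L2On n f Set.univ
          ≤ ENNReal.ofReal ((K / γ) ^ (K * (1 + L * Real.sqrt lam))) * L2On n f ω)
    (α : ℝ) (hα : α ∈ Set.Ioo (0 : ℝ) 1) (ω : Set (EuclideanSpace ℝ (Fin n)))
    (hω : MeasurableSet ω) (c C L₀ : ℝ) (hc : 0 < c) (hC : 0 < C) (hL₀ : 0 < L₀)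
    (hthick : ∀ L : ℝ, 0 < L → L < L₀ → ∀ x : EuclideanSpace ℝ (Fin n),
      ENNReal.ofReal (c * Real.exp (-C * L ^ (-α))) * volume (Metric.ball x L)
        ≤ volume (ω ∩ Metric.ball x L)) :
    ∃ c₁ > (0 : ℝ), ∀ lam : ℝ, 0 < lam → ∀ f : EuclideanSpace ℝ (Fin n) → ℂ,
      MemLp f 2 volume → BandLimited n (Real.sqrt lam) f →
      L2On n f Set.univ
        ≤ ENNReal.ofReal (c₁ * Real.exp (c₁ * lam ^ (α / 2))) * L2On n f ω := by
  
  obtain ⟨hα0, hα1⟩ := hα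
  have hK0 : (0:ℝ) < K := lt_trans one_pos hK
  set E : ℝ := K * (1 + L₀ / 2) with hE
  have hEpos : 0 < E := mul_pos hK0 (by positivity)
  set M : ℝ := K * max 1 c⁻¹ with hM
  have hmaxpos : (0:ℝ) < max 1 c⁻¹ := lt_of_lt_of_le one_pos (le_max_left _ _)
  have hMpos : 0 < M := mul_pos hK0 hmaxpos
  set B : ℝ := E * C * (2 / L₀) ^ α with hB
  have h2L : (0:ℝ) < (2 / L₀) ^ α := Real.rpow_pos_of_pos (by positivity) α
  have hBpos : 0 < B := mul_pos (mul_pos hEpos hC) h2L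
  have hMEpos : 0 < M ^ E := Real.rpow_pos_of_pos hMpos E
  have key : ∀ lam : ℝ, 1 ≤ lam → ∀ f : EuclideanSpace ℝ (Fin n) → ℂ,
      MemLp f 2 volume → BandLimited n (Real.sqrt lam) f →
      L2On n f Set.univ
        ≤ ENNReal.ofReal (M ^ E * Real.exp (B * lam ^ (α / 2))) * L2On n f ω := by
    intro lam hlam f hf hbl
    have hlam0 : 0 < lam := lt_of_lt_of_le one_pos hlam
    have hs1 : 1 ≤ Real.sqrt lam := by
      rw [show (1:ℝ) = Real.sqrt 1 by simp]
      exact Real.sqrt_le_sqrt hlam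
    set s := Real.sqrt lam with hs
    have hs0 : 0 < s := lt_of_lt_of_le one_pos hs1
    set L : ℝ := L₀ / (2 * s) with hL
    have hLpos : 0 < L := by positivity
    have hLlt : L < L₀ := by
      rw [hL, div_lt_iff₀ (by positivity)]
      nlinarith
    set γ : ℝ := min 1 (c * Real.exp (-C * L ^ (-α))) with hγ
    have hγpos : 0 < γ := lt_min one_pos (by positivity)
    have hγ1 : γ ≤ 1 := min_le_left _ _
    have hthick' : ∀ x : EuclideanSpace ℝ (Fin n),
        ENNReal.ofReal γ * volume (Metric.ball x L) ≤ volume (ω ∩ Metric.ball x L) := by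
      intro x
      exact le_trans (mul_le_mul_left (ENNReal.ofReal_le_ofReal (min_le_right _ _)) _)
        (hthick L hLpos hLlt x)
    have hmain := hKov γ L ⟨hγpos, hγ1⟩ hLpos ω hω hthick' lam hlam0.le f hf hbl
    refine le_trans hmain (mul_le_mul_left (ENNReal.ofReal_le_ofReal ?_) _)
    have hLs : L * s = L₀ / 2 := by
      rw [hL]; field_simp
    have hexp_eq : K * (1 + L * Real.sqrt lam) = E := by rw [← hs, hLs, hE]
    rw [hexp_eq]
    have hLα : L ^ (-α) = (2 / L₀) ^ α * lam ^ (α / 2) := by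
      have h1 : L ^ (-α) = (L⁻¹) ^ α := by
        rw [Real.rpow_neg hLpos.le, Real.inv_rpow hLpos.le]
      have h2 : L⁻¹ = (2 / L₀) * s := by
        rw [hL]; field_simp
      rw [h1, h2, Real.mul_rpow (by positivity) hs0.le, hs, Real.sqrt_eq_rpow,
        ← Real.rpow_mul hlam0.le]
      congr 1
      ring
    have hy0 : 0 ≤ C * L ^ (-α) := by positivity
    have hexp1 : 1 ≤ Real.exp (C * L ^ (-α)) := Real.one_le_exp hy0
    have hinv : γ⁻¹ ≤ max 1 c⁻¹ * Real.exp (C * L ^ (-α)) := by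
      rcases min_cases (1:ℝ) (c * Real.exp (-C * L ^ (-α))) with ⟨h, _⟩ | ⟨h, _⟩
      · rw [hγ, h, inv_one]
        calc (1:ℝ) ≤ max 1 c⁻¹ := le_max_left _ _
          _ ≤ _ := le_mul_of_one_le_right hmaxpos.le hexp1
      · rw [hγ, h, mul_inv, ← Real.exp_neg, show -(-C * L ^ (-α)) = C * L ^ (-α) by ring]
        exact mul_le_mul (le_max_right _ _) le_rfl (Real.exp_pos _).le hmaxpos.le
    have hbase : K / γ ≤ M * Real.exp (C * L ^ (-α)) := by
      rw [div_eq_mul_inv, hM, mul_assoc]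
      exact mul_le_mul_of_nonneg_left hinv hK0.le
    have harg : C * L ^ (-α) * E = B * lam ^ (α / 2) := by
      rw [hLα, hB]; ring
    calc (K / γ) ^ E ≤ (M * Real.exp (C * L ^ (-α))) ^ E :=
          Real.rpow_le_rpow (by positivity) hbase hEpos.le
      _ = M ^ E * Real.exp (C * L ^ (-α)) ^ E :=
          Real.mul_rpow hMpos.le (Real.exp_pos _).le
      _ = M ^ E * Real.exp (C * L ^ (-α) * E) := by rw [← Real.exp_mul]
      _ = M ^ E * Real.exp (B * lam ^ (α / 2)) := by rw [harg]
  set D : ℝ := M ^ E * Real.exp B with hD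
  have hDpos : 0 < D := mul_pos hMEpos (Real.exp_pos _)
  refine ⟨max D B, lt_of_lt_of_le hDpos (le_max_left _ _), ?_⟩
  set c₁ : ℝ := max D B with hc₁
  have hc₁pos : 0 < c₁ := lt_of_lt_of_le hDpos (le_max_left _ _)
  intro lam hlam f hf hbl
  have hlamα : 0 ≤ lam ^ (α / 2) := Real.rpow_nonneg hlam.le _
  rcases le_or_gt 1 lam with h1 | h1
  · refine le_trans (key lam h1 f hf hbl)
      (mul_le_mul_left (ENNReal.ofReal_le_ofReal ?_) _)
    have hME : M ^ E ≤ c₁ :=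
      le_trans (le_mul_of_one_le_right hMEpos.le (Real.one_le_exp hBpos.le)) (le_max_left _ _)
    refine mul_le_mul hME ?_ (Real.exp_pos _).le hc₁pos.le
    exact Real.exp_le_exp.mpr (mul_le_mul_of_nonneg_right (le_max_right _ _) hlamα)
  · have hbl1 : BandLimited n (Real.sqrt 1) f := by
      obtain ⟨g, hgint, hgsupp, hgf⟩ := hbl
      exact ⟨g, hgint, hgsupp.trans
        (Metric.closedBall_subset_closedBall (Real.sqrt_le_sqrt h1.le)), hgf⟩
    refine le_trans (key 1 le_rfl f hf hbl1)
      (mul_le_mul_left (ENNReal.ofReal_le_ofReal ?_) _)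
    rw [Real.one_rpow, mul_one]
    calc D ≤ c₁ := le_max_left _ _
      _ ≤ c₁ * Real.exp (c₁ * lam ^ (α / 2)) :=
        le_mul_of_one_le_right hc₁pos.le
          (Real.one_le_exp (mul_nonneg hc₁pos.le hlamα))
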